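/- Let A_sq be the adjacency matrix of the 4-cycle on nodes {1,2,3,4} with edges {1,2},{1,3},{2,4},{3,4} (so A_sq = [[0,1,1,0],[1,0,0,1],[1,0,0,1],[0,1,1,0]]), take O = 1, X = (1+A_sq²)^{-1/2}, Y = A_sq(1+A_sq²)^{-1/2}, S = fromBlocks X (−Y) Y X, and for s > 0 let Γ = S · Γ_sqz(4,s) · Sᵀ. Set κ = (s²−1)/(5s). Then, in quadrature ordering (Q₁,Q₂,Q₃,Q₄,P₁,P₂,P₃,P₄): for every node i, Γ[Q_i,Q_i] = 3s/5 + 2/(5s), Γ[P_i,P_i] = 2s/5 + 3/(5s), and Γ[Q_i,P_i] = 0; for every adjacent pair i ~ j, Γ[Q_i,P_j] = κ, Γ[Q_i,Q_j] = 0, and Γ[P_i,P_j] = 0; for the two non-adjacent pairs {1,4} and {2,3}, Γ[Q_i,Q_j] = −2κ, Γ[P_i,P_j] = 2κ, and Γ[Q_i,P_j] = 0. -/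

import Mathlib

open Matrix

noncomputable section

/-- For a real symmetric matrix `A`, the matrix `1 + A²` is positive definite. -/
theorem onePlusSq_posDef {n : ℕ} (A : Matrix (Fin n) (Fin n) ℝ) (hA : Aᵀ = A) :
    (1 + A * A).PosDef := by
  have h2 : (A * A).PosSemidef := by
    have h := Matrix.posSemidef_conjTranspose_mul_self A
    simpa [Matrix.conjTranspose_eq_transpose_of_trivial, hA] using h
  exact Matrix.PosDef.add_posSemidef Matrix.PosDef.one h2

section OldSqrt

open scoped ComplexOrder

/-- The square root of a positive semidefinite matrix, as defined in the older Mathlib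
(removed since). -/
def Matrix.PosSemidef.sqrt {n 𝕜 : Type*} [Fintype n] [DecidableEq n] [RCLike 𝕜]
    {A : Matrix n n 𝕜} (hA : A.PosSemidef) : Matrix n n 𝕜 :=
  hA.1.eigenvectorUnitary.1 * diagonal ((↑) ∘ (√·) ∘ hA.1.eigenvalues) *
    (star hA.1.eigenvectorUnitary : Matrix n n 𝕜)

end OldSqrt

/-- `(1 + A²)^{-1/2}`: the inverse of the unique positive-definite square root of `1 + A²`. -/
def invSqrtOnePlusSq {n : ℕ} (A : Matrix (Fin n) (Fin n) ℝ) (hA : Aᵀ = A) :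
    Matrix (Fin n) (Fin n) ℝ :=
  ((onePlusSq_posDef A hA).posSemidef.sqrt)⁻¹

/-- Covariance matrix `diag(s,…,s,s⁻¹,…,s⁻¹)` of `n` equally squeezed vacuum modes. -/
def GammaSqz (n : ℕ) (s : ℝ) : Matrix (Fin n ⊕ Fin n) (Fin n ⊕ Fin n) ℝ :=
  Matrix.fromBlocks (s • 1) 0 0 (s⁻¹ • 1)

/-- Adjacency matrix of the 4-cycle with edges {1,2},{1,3},{2,4},{3,4}. -/
def Asq : Matrix (Fin 4) (Fin 4) ℝ := !![0,1,1,0; 1,0,0,1; 1,0,0,1; 0,1,1,0]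

theorem Asq_symm : Asqᵀ = Asq := by
  ext i j
  fin_cases i <;> fin_cases j <;> simp [Asq, Matrix.transpose_apply]

/-- Covariance matrix of the square cluster state built with squeezing `s`. -/
def GammaSquare (s : ℝ) : Matrix (Fin 4 ⊕ Fin 4) (Fin 4 ⊕ Fin 4) ℝ :=
  Matrix.fromBlocks (invSqrtOnePlusSq Asq Asq_symm) (-(Asq * invSqrtOnePlusSq Asq Asq_symm))
      (Asq * invSqrtOnePlusSq Asq Asq_symm) (invSqrtOnePlusSq Asq Asq_symm) *
    GammaSqz 4 s *
    (Matrix.fromBlocks (invSqrtOnePlusSq Asq Asq_symm) (-(Asq * invSqrtOnePlusSq Asq Asq_symm))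
        (Asq * invSqrtOnePlusSq Asq Asq_symm) (invSqrtOnePlusSq Asq Asq_symm))ᵀ

open scoped ComplexOrder in
lemma PosSemidef_sqrt_mul_self' {n 𝕜 : Type*} [Fintype n] [DecidableEq n] [RCLike 𝕜]
    {A : Matrix n n 𝕜} (hA : A.PosSemidef) : hA.sqrt * hA.sqrt = A := by
  unfold Matrix.PosSemidef.sqrt
  have hU : (star hA.1.eigenvectorUnitary : Matrix n n 𝕜) * hA.1.eigenvectorUnitary.1 = 1 :=
    Unitary.coe_star_mul_self _
  conv_rhs => rw [hA.1.spectral_theorem, Unitary.conjStarAlgAut_apply]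
  calc _ = hA.1.eigenvectorUnitary.1 * diagonal ((↑) ∘ (√·) ∘ hA.1.eigenvalues) *
        ((star hA.1.eigenvectorUnitary : Matrix n n 𝕜) * hA.1.eigenvectorUnitary.1) *
        diagonal ((↑) ∘ (√·) ∘ hA.1.eigenvalues) * (star hA.1.eigenvectorUnitary : Matrix n n 𝕜) := by
          simp only [Matrix.mul_assoc]
    _ = _ := by
      rw [hU, Matrix.mul_one, Matrix.mul_assoc _ (diagonal _) (diagonal _), diagonal_mul_diagonal]
      congr 3
      funext i
      simp only [Function.comp_apply, ← RCLike.ofReal_mul]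
      rw [Real.mul_self_sqrt (hA.eigenvalues_nonneg i)]

open scoped ComplexOrder in
lemma PosSemidef_sqrt_isHermitian' {n 𝕜 : Type*} [Fintype n] [DecidableEq n] [RCLike 𝕜]
    {A : Matrix n n 𝕜} (hA : A.PosSemidef) : hA.sqrt.IsHermitian := by
  unfold Matrix.PosSemidef.sqrt Matrix.IsHermitian
  simp [Matrix.conjTranspose_mul, Matrix.mul_assoc, Matrix.diagonal_conjTranspose, Matrix.star_eq_conjTranspose]
  congr 3
  funext i
  simp [Pi.star_apply, RCLike.star_def]

/- ### Auxiliary results -/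

/-- `(1 + Asq²)⁻¹`, as an explicit matrix. -/
def Cmat : Matrix (Fin 4) (Fin 4) ℝ :=
  !![3/5,0,0,-2/5; 0,3/5,-2/5,0; 0,-2/5,3/5,0; -2/5,0,0,3/5]

/-- `Asq²`, as an explicit matrix. -/
def AAmat : Matrix (Fin 4) (Fin 4) ℝ := !![2,0,0,2; 0,2,2,0; 0,2,2,0; 2,0,0,2]

lemma hAA : Asq * Asq = AAmat := by
  show (!![0,1,1,0; 1,0,0,1; 1,0,0,1; 0,1,1,0] : Matrix (Fin 4) (Fin 4) ℝ) *
      !![0,1,1,0; 1,0,0,1; 1,0,0,1; 0,1,1,0] = !![2,0,0,2; 0,2,2,0; 0,2,2,0; 2,0,0,2]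
  ext i j
  rw [Matrix.mul_apply, Fin.sum_univ_four]
  fin_cases i <;> fin_cases j <;> simp <;> norm_num

lemma hAC : Asq * Cmat = (1/5 : ℝ) • Asq := by
  show (!![0,1,1,0; 1,0,0,1; 1,0,0,1; 0,1,1,0] : Matrix (Fin 4) (Fin 4) ℝ) *
      !![3/5,0,0,-2/5; 0,3/5,-2/5,0; 0,-2/5,3/5,0; -2/5,0,0,3/5] =
      (1/5 : ℝ) • !![0,1,1,0; 1,0,0,1; 1,0,0,1; 0,1,1,0]
  ext i j
  rw [Matrix.mul_apply, Fin.sum_univ_four]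
  fin_cases i <;> fin_cases j <;> simp <;> norm_num

lemma hCA : Cmat * Asq = (1/5 : ℝ) • Asq := by
  show (!![3/5,0,0,-2/5; 0,3/5,-2/5,0; 0,-2/5,3/5,0; -2/5,0,0,3/5] : Matrix (Fin 4) (Fin 4) ℝ) *
      !![0,1,1,0; 1,0,0,1; 1,0,0,1; 0,1,1,0] =
      (1/5 : ℝ) • !![0,1,1,0; 1,0,0,1; 1,0,0,1; 0,1,1,0]
  ext i j
  rw [Matrix.mul_apply, Fin.sum_univ_four]
  fin_cases i <;> fin_cases j <;> simp <;> norm_num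

lemma hCmat : (1 + Asq * Asq) * Cmat = 1 := by
  rw [Matrix.add_mul, Matrix.one_mul, Matrix.mul_assoc, hAC, Matrix.mul_smul, hAA]
  ext i j
  fin_cases i <;> fin_cases j <;>
    simp [Cmat, AAmat, Matrix.one_apply] <;> norm_num

lemma hXX : invSqrtOnePlusSq Asq Asq_symm * invSqrtOnePlusSq Asq Asq_symm = Cmat := by
  unfold invSqrtOnePlusSq
  rw [← Matrix.mul_inv_rev, PosSemidef_sqrt_mul_self' (onePlusSq_posDef Asq Asq_symm).posSemidef]
  exact Matrix.inv_eq_right_inv hCmat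

lemma hXt : (invSqrtOnePlusSq Asq Asq_symm)ᵀ = invSqrtOnePlusSq Asq Asq_symm := by
  unfold invSqrtOnePlusSq
  rw [Matrix.transpose_nonsing_inv]
  congr 1
  have h := PosSemidef_sqrt_isHermitian' (onePlusSq_posDef Asq Asq_symm).posSemidef
  simpa [Matrix.IsHermitian, Matrix.conjTranspose_eq_transpose_of_trivial] using h

lemma blocks_formula {n : ℕ} (X A : Matrix (Fin n) (Fin n) ℝ) (hX : Xᵀ = X) (hA : Aᵀ = A)
    (s : ℝ) :
    Matrix.fromBlocks X (-(A*X)) (A*X) X *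
        Matrix.fromBlocks (s • (1 : Matrix (Fin n) (Fin n) ℝ)) 0 0 (s⁻¹ • 1) *
        (Matrix.fromBlocks X (-(A*X)) (A*X) X)ᵀ =
      Matrix.fromBlocks (s • (X*X) + s⁻¹ • (A*(X*X)*A)) (s • (X*X*A) - s⁻¹ • (A*(X*X)))
        (s • (A*(X*X)) - s⁻¹ • (X*X*A)) (s • (A*(X*X)*A) + s⁻¹ • (X*X)) := by
  simp [Matrix.fromBlocks_transpose, Matrix.fromBlocks_multiply, Matrix.transpose_mul, hX, hA,
    Matrix.mul_smul, Matrix.smul_mul, Matrix.mul_assoc, sub_eq_add_neg]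

lemma gamma_blocks (s : ℝ) :
    GammaSquare s = Matrix.fromBlocks
      (s • Cmat + s⁻¹ • ((1/5 : ℝ) • AAmat))
      (s • ((1/5 : ℝ) • Asq) - s⁻¹ • ((1/5 : ℝ) • Asq))
      (s • ((1/5 : ℝ) • Asq) - s⁻¹ • ((1/5 : ℝ) • Asq))
      (s • ((1/5 : ℝ) • AAmat) + s⁻¹ • Cmat) := by
  unfold GammaSquare GammaSqz
  rw [blocks_formula _ _ hXt Asq_symm, hXX, hAC, hCA, Matrix.smul_mul, hAA]

set_option maxHeartbeats 2000000 in
/-- Entries of the covariance matrix of the square cluster state, with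
`κ = (s²−1)/(5s)`: diagonal variances, vanishing `Q_i P_i` covariances, `Q_i P_j = κ`
for adjacent pairs, and `Q_i Q_j = −2κ`, `P_i P_j = 2κ` for non-adjacent pairs. -/
theorem square_cluster_covariances (s : ℝ) (hs : 0 < s) :
    (∀ i : Fin 4, GammaSquare s (Sum.inl i) (Sum.inl i) = 3 * s / 5 + 2 / (5 * s)) ∧
    (∀ i : Fin 4, GammaSquare s (Sum.inr i) (Sum.inr i) = 2 * s / 5 + 3 / (5 * s)) ∧
    (∀ i : Fin 4, GammaSquare s (Sum.inl i) (Sum.inr i) = 0) ∧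
    (∀ i j : Fin 4, Asq i j = 1 →
      GammaSquare s (Sum.inl i) (Sum.inr j) = (s ^ 2 - 1) / (5 * s) ∧
      GammaSquare s (Sum.inl i) (Sum.inl j) = 0 ∧
      GammaSquare s (Sum.inr i) (Sum.inr j) = 0) ∧
    (∀ i j : Fin 4, i ≠ j → Asq i j = 0 →
      GammaSquare s (Sum.inl i) (Sum.inl j) = -2 * ((s ^ 2 - 1) / (5 * s)) ∧
      GammaSquare s (Sum.inr i) (Sum.inr j) = 2 * ((s ^ 2 - 1) / (5 * s)) ∧
      GammaSquare s (Sum.inl i) (Sum.inr j) = 0) := by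
  have hs0 : s ≠ 0 := ne_of_gt hs
  simp only [gamma_blocks s]
  simp only [Matrix.fromBlocks_apply₁₁, Matrix.fromBlocks_apply₁₂, Matrix.fromBlocks_apply₂₁,
    Matrix.fromBlocks_apply₂₂, Matrix.add_apply, Matrix.sub_apply, Matrix.smul_apply,
    smul_eq_mul]
  refine ⟨?_, ?_, ?_, ?_, ?_⟩
  · intro i
    fin_cases i <;> (norm_num [Cmat, AAmat] <;> field_simp <;> ring)
  · intro i
    fin_cases i <;> (norm_num [Cmat, AAmat] <;> field_simp <;> ring)
  · intro i
    fin_cases i <;> norm_num [Asq]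
  · intro i j h
    fin_cases i <;> fin_cases j <;>
      first
      | (norm_num [Asq] at h; done)
      | (refine ⟨?_, ?_, ?_⟩ <;> norm_num [Asq, Cmat, AAmat] <;> field_simp <;> ring)
  · intro i j hne h
    fin_cases i <;> fin_cases j <;>
      first
      | (exact absurd rfl hne)
      | (norm_num [Asq] at h; done)
      | (refine ⟨?_, ?_, ?_⟩ <;> norm_num [Asq, Cmat, AAmat] <;> field_simp <;> ring)
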